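/- Let γ > 1, k₀ > 0, and let ρ, v¹, v² be C¹ functions on an open set O ⊆ ℝ³ (coordinates (t,x₁,x₂)) with ρ > 0, solving ∂_tρ + ∂₁(ρv¹) + ∂₂(ρv²) = 0 and ∂_t vⁱ + v¹∂₁vⁱ + v²∂₂vⁱ = -(2c/(γ-1))·∂ᵢc for i = 1,2, where c := √(k₀γ)·ρ^{(γ-1)/2}. Define the second null frame derivatives L̊f := ∂_t f + (v¹+c)∂₁f + v²∂₂f, T̂̊f := -∂₁f, X̊f := ∂₂f. With w̲ := c/(γ-1) + v¹/2, w := c/(γ-1) - v¹/2, ψ₂ := -v², the following diagonal system holds at every point of O: L̊(w̲) = (1/2)c·X̊(ψ₂); L̊(w) = -2c·T̂̊(w) + (1/2)c·X̊(ψ₂); and L̊(ψ₂) = -c·T̂̊(ψ₂) + c·X̊(w+w̲). -/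

import Mathlib

/-- `∂_t` of a function on `ℝ³ = ℝ × ℝ × ℝ` with coordinates `(t, x₁, x₂)`. -/
noncomputable def pdt (f : ℝ × ℝ × ℝ → ℝ) (x : ℝ × ℝ × ℝ) : ℝ := fderiv ℝ f x (1, 0, 0)

/-- `∂₁` of a function on `ℝ³`. -/
noncomputable def pd1 (f : ℝ × ℝ × ℝ → ℝ) (x : ℝ × ℝ × ℝ) : ℝ := fderiv ℝ f x (0, 1, 0)

/-- `∂₂` of a function on `ℝ³`. -/
noncomputable def pd2 (f : ℝ × ℝ × ℝ → ℝ) (x : ℝ × ℝ × ℝ) : ℝ := fderiv ℝ f x (0, 0, 1)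

/-- Material derivative `B f = ∂_t f + v¹ ∂₁ f + v² ∂₂ f`. -/
noncomputable def Bd (v1 v2 f : ℝ × ℝ × ℝ → ℝ) (x : ℝ × ℝ × ℝ) : ℝ :=
  pdt f x + v1 x * pd1 f x + v2 x * pd2 f x

/-- Sound speed `c = √(k₀γ) ρ^{(γ-1)/2}` of the polytropic gas. -/
noncomputable def cs (γ k₀ : ℝ) (ρ : ℝ × ℝ × ℝ → ℝ) (x : ℝ × ℝ × ℝ) : ℝ :=
  Real.sqrt (k₀ * γ) * ρ x ^ ((γ - 1) / 2)

/-- Second null frame derivative `L̊ f = ∂_t f + (v¹+c) ∂₁ f + v² ∂₂ f`. -/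
noncomputable def Lring (γ k₀ : ℝ) (ρ v1 v2 f : ℝ × ℝ × ℝ → ℝ) (x : ℝ × ℝ × ℝ) : ℝ :=
  pdt f x + (v1 x + cs γ k₀ ρ x) * pd1 f x + v2 x * pd2 f x

/-- Second null frame derivative `T̂̊ f = -∂₁ f`. -/
noncomputable def Thring (f : ℝ × ℝ × ℝ → ℝ) (x : ℝ × ℝ × ℝ) : ℝ := -pd1 f x

/-- Second null frame derivative `X̊ f = ∂₂ f`. -/
noncomputable def Xring (f : ℝ × ℝ × ℝ → ℝ) (x : ℝ × ℝ × ℝ) : ℝ := pd2 f x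

/-- **Euler equations in diagonal form in the second null frame** in terms of the Riemann
invariants `w̲ = c/(γ-1) + v¹/2`, `w = c/(γ-1) - v¹/2`, and `ψ₂ = -v²`. -/
theorem stmt_5 (γ k₀ : ℝ) (hγ : 1 < γ) (hk : 0 < k₀)
    (O : Set (ℝ × ℝ × ℝ)) (hO : IsOpen O)
    (ρ v1 v2 : ℝ × ℝ × ℝ → ℝ)
    (hρ : ContDiffOn ℝ 1 ρ O) (hv1 : ContDiffOn ℝ 1 v1 O) (hv2 : ContDiffOn ℝ 1 v2 O)
    (hρpos : ∀ x ∈ O, 0 < ρ x)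
    (hcont : ∀ x ∈ O,
      pdt ρ x + pd1 (fun y => ρ y * v1 y) x + pd2 (fun y => ρ y * v2 y) x = 0)
    (hmom1 : ∀ x ∈ O, Bd v1 v2 v1 x = -(2 * cs γ k₀ ρ x / (γ - 1)) * pd1 (cs γ k₀ ρ) x)
    (hmom2 : ∀ x ∈ O, Bd v1 v2 v2 x = -(2 * cs γ k₀ ρ x / (γ - 1)) * pd2 (cs γ k₀ ρ) x)
    (wb w ψ2 : ℝ × ℝ × ℝ → ℝ)
    (hwb : wb = fun x => cs γ k₀ ρ x / (γ - 1) + v1 x / 2)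
    (hw : w = fun x => cs γ k₀ ρ x / (γ - 1) - v1 x / 2)
    (hψ2 : ψ2 = fun x => -v2 x) :
    ∀ x ∈ O,
      (Lring γ k₀ ρ v1 v2 wb x = 1 / 2 * cs γ k₀ ρ x * Xring ψ2 x)
      ∧ (Lring γ k₀ ρ v1 v2 w x
          = -2 * cs γ k₀ ρ x * Thring w x + 1 / 2 * cs γ k₀ ρ x * Xring ψ2 x)
      ∧ (Lring γ k₀ ρ v1 v2 ψ2 x
          = -(cs γ k₀ ρ x) * Thring ψ2 x
            + cs γ k₀ ρ x * Xring (fun y => w y + wb y) x) := by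
  intro x hx
  have hγ1 : γ - 1 ≠ 0 := by linarith
  have hxn : O ∈ nhds x := hO.mem_nhds hx
  have hρd : DifferentiableAt ℝ ρ x := (hρ.contDiffAt hxn).differentiableAt one_ne_zero
  have hv1d : DifferentiableAt ℝ v1 x := (hv1.contDiffAt hxn).differentiableAt one_ne_zero
  have hv2d : DifferentiableAt ℝ v2 x := (hv2.contDiffAt hxn).differentiableAt one_ne_zero
  have hρx : 0 < ρ x := hρpos x hx
  set K := Real.sqrt (k₀ * γ) with hK
  set α : ℝ := (γ - 1) / 2 with hα
  set m : ℝ := K * (α * ρ x ^ (α - 1)) with hm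
  -- derivative of the sound speed
  have hc' : HasFDerivAt (cs γ k₀ ρ) (m • fderiv ℝ ρ x) x := by
    have h1 : HasFDerivAt (fun y => ρ y ^ α) ((α * ρ x ^ (α - 1)) • fderiv ℝ ρ x) x :=
      hρd.hasFDerivAt.rpow_const (Or.inl hρx.ne')
    have h2 := h1.const_mul K
    rw [smul_smul] at h2
    exact h2
  have hcd : DifferentiableAt ℝ (cs γ k₀ ρ) x := hc'.differentiableAt
  -- pointwise derivative values of c
  have hDc : ∀ u, fderiv ℝ (cs γ k₀ ρ) x u = m * fderiv ℝ ρ x u := by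
    intro u; rw [hc'.fderiv]; simp
  -- m * ρ x = α * c
  have hmρ : m * ρ x = α * cs γ k₀ ρ x := by
    have h3 : ρ x ^ α / ρ x * ρ x = ρ x ^ α := div_mul_cancel₀ _ hρx.ne'
    have hcsx : cs γ k₀ ρ x = K * ρ x ^ α := rfl
    rw [hm, Real.rpow_sub_one hρx.ne', hcsx]
    linear_combination K * α * h3
  have hg : (γ - 1)⁻¹ * (γ - 1) = 1 := inv_mul_cancel₀ hγ1
  -- derivatives of wb
  have ewb : wb = fun y => (γ - 1)⁻¹ * cs γ k₀ ρ y + 2⁻¹ * v1 y := by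
    rw [hwb]; funext y; ring
  have hDwb : ∀ u, fderiv ℝ wb x u
      = (γ - 1)⁻¹ * (m * fderiv ℝ ρ x u) + 2⁻¹ * fderiv ℝ v1 x u := by
    intro u
    rw [ewb, fderiv_fun_add (hcd.const_mul _) (hv1d.const_mul _), fderiv_const_mul hcd,
      fderiv_const_mul hv1d]
    simp [hDc u, mul_comm]
  have ew : w = fun y => (γ - 1)⁻¹ * cs γ k₀ ρ y + (-2⁻¹) * v1 y := by
    rw [hw]; funext y; ring
  have hDw : ∀ u, fderiv ℝ w x u
      = (γ - 1)⁻¹ * (m * fderiv ℝ ρ x u) + (-2⁻¹) * fderiv ℝ v1 x u := by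
    intro u
    rw [ew, fderiv_fun_add (hcd.const_mul _) (hv1d.const_mul _), fderiv_const_mul hcd,
      fderiv_const_mul hv1d]
    simp [hDc u, mul_comm]
  have hDψ : ∀ u, fderiv ℝ ψ2 x u = -fderiv ℝ v2 x u := by
    intro u; rw [hψ2, fderiv_fun_neg]; simp
  have hDwwb : ∀ u, fderiv ℝ (fun y => w y + wb y) x u
      = fderiv ℝ w x u + fderiv ℝ wb x u := by
    intro u
    have hwd : DifferentiableAt ℝ w x := by
      rw [ew]; exact (hcd.const_mul _).add (hv1d.const_mul _)
    have hwbd : DifferentiableAt ℝ wb x := by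
      rw [ewb]; exact (hcd.const_mul _).add (hv1d.const_mul _)
    rw [fderiv_fun_add hwd hwbd]; simp
  -- continuity equation expanded
  have hcont' : pdt ρ x + (ρ x * pd1 v1 x + v1 x * pd1 ρ x)
      + (ρ x * pd2 v2 x + v2 x * pd2 ρ x) = 0 := by
    have h1 : pd1 (fun y => ρ y * v1 y) x = ρ x * pd1 v1 x + v1 x * pd1 ρ x := by
      unfold pd1; rw [fderiv_fun_mul hρd hv1d]; simp
    have h2 : pd2 (fun y => ρ y * v2 y) x = ρ x * pd2 v2 x + v2 x * pd2 ρ x := by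
      unfold pd2; rw [fderiv_fun_mul hρd hv2d]; simp
    have := hcont x hx
    rw [h1, h2] at this
    exact this
  have hm1 := hmom1 x hx
  have hm2 := hmom2 x hx
  unfold Bd at hm1 hm2
  unfold Lring Thring Xring Bd pdt pd1 pd2 at *
  rw [hDc] at hm1 hm2
  rw [hDwb, hDwb, hDwb, hDw, hDw, hDw, hDψ, hDψ, hDψ, hDwwb, hDwb, hDw]
  set A1 := fderiv ℝ v1 x (0, 1, 0)
  set B2 := fderiv ℝ v2 x (0, 0, 1)
  have hP : ρ x ^ (α - 1) * ρ x = ρ x ^ α := by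
    rw [Real.rpow_sub_one hρx.ne']; exact div_mul_cancel₀ _ hρx.ne'
  have hc0' : cs γ k₀ ρ x = K * ρ x ^ α := rfl
  set c0 := cs γ k₀ ρ x
  refine ⟨?_, ?_, ?_⟩
  · linear_combination (γ - 1)⁻¹ * m * hcont' + (1 / 2) * hm1
      + (γ - 1)⁻¹ * (A1 + B2) * hmρ + (γ - 1)⁻¹ * c0 * (A1 + B2) * hα
      + (c0 * (A1 + B2) / 2) * hg
      + (A1 + B2) * hc0' - K * (A1 + B2) * hP - K * ρ x ^ (α - 1) * ρ x * (A1 + B2) * hg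
  · linear_combination (γ - 1)⁻¹ * m * hcont' - (1 / 2) * hm1
      + (γ - 1)⁻¹ * (A1 + B2) * hmρ + (γ - 1)⁻¹ * c0 * (A1 + B2) * hα
      + (c0 * (A1 + B2) / 2) * hg
      + (A1 + B2) * hc0' - K * (A1 + B2) * hP - K * ρ x ^ (α - 1) * ρ x * (A1 + B2) * hg
  · linear_combination -hm2
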